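/- arXiv:2501.17613 — 4 statements merged into one kernel-verified Lean document; each statement's English description precedes it below -/
import Mathlib

section
/- Let R be a discrete valuation ring with maximal ideal 𝔪 whose residue field R/𝔪 is finite of odd cardinality q. Let d ≥ 1 and θ ≥ 1 be integers, and let S ∈ M_d(R) be a symmetric matrix whose determinant is a unit of R. For each θ, write S̄ for the image of S in M_d(R/𝔪^θ) and O_S(R/𝔪^θ) = { g ∈ M_d(R/𝔪^θ) : gᵀ S̄ g = S̄ }. Then O_S(R/𝔪^θ) is finite and |O_S(R/𝔪^θ)| = q^{(θ−1)·d(d−1)/2} · |O_S(R/𝔪)|. -/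
open Matrix

lemma card_lowerPairs (d : ℕ) :
    Nat.card {p : Fin d × Fin d // p.2 < p.1} = d * (d - 1) / 2 := by
  have e : {p : Fin d × Fin d // p.2 < p.1} ≃ Σ i : Fin d, Fin i.val :=
    { toFun := fun p => ⟨p.1.1, ⟨p.1.2.1, p.2⟩⟩
      invFun := fun x => ⟨(x.1, ⟨x.2.1, x.2.2.trans x.1.2⟩), x.2.2⟩
      left_inv := fun p => rfl
      right_inv := fun x => rfl }
  rw [Nat.card_congr e, Nat.card_eq_fintype_card, Fintype.card_sigma]
  simp only [Fintype.card_fin]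
  rw [Fin.sum_univ_eq_sum_range (fun i => i), Finset.sum_range_id]

lemma skew_card {A : Type*} [CommRing A] [Finite A] (d : ℕ) (J : Set A)
    (hJneg : ∀ x ∈ J, -x ∈ J) (hJ0 : (0:A) ∈ J)
    (h2 : IsUnit (2 : A)) :
    Nat.card {M : Matrix (Fin d) (Fin d) A // (∀ i j, M i j ∈ J) ∧ Mᵀ = -M}
      = Nat.card J ^ (d * (d - 1) / 2) := by
  have e : {M : Matrix (Fin d) (Fin d) A // (∀ i j, M i j ∈ J) ∧ Mᵀ = -M}
      ≃ ({p : Fin d × Fin d // p.2 < p.1} → J) :=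
    { toFun := fun M p => ⟨M.1 p.1.1 p.1.2, M.2.1 _ _⟩
      invFun := fun v =>
        ⟨fun i j => if h : j < i then (v ⟨(i,j), h⟩ : A)
          else if h' : i < j then -(v ⟨(j,i), h'⟩ : A) else 0, by
          intro i j
          by_cases h : j < i
          · simpa [h] using (v ⟨(i,j), h⟩).2
          · by_cases h' : i < j
            · simpa [h, h'] using hJneg _ (v ⟨(j,i), h'⟩).2
            · simpa [h, h'] using hJ0, by
          ext i j
          erw [transpose_apply, neg_apply]
          rcases lt_trichotomy i j with h | h | h
          · simp [transpose_apply, h, asymm h]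
          · simp [transpose_apply, h]
          · simp [transpose_apply, h, asymm h]⟩
      left_inv := by
        rintro ⟨M, hJ, hskew⟩
        ext i j
        have hsk : ∀ a b, M b a = - M a b := by
          intro a b
          have := congrFun (congrFun hskew a) b
          simpa [transpose_apply] using this
        by_cases h : j < i
        · simp [h]
        · by_cases h' : i < j
          · simp [h, h', hsk i j]
          · have hij : i = j := le_antisymm (not_lt.1 h) (not_lt.1 h')
            subst hij
            have : M i i = - M i i := hsk i i
            have h2' : (2:A) * M i i = 2 * 0 := by
              rw [mul_zero, two_mul]
              exact add_eq_zero_iff_eq_neg.mpr this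
            simp [h, h']
            exact (h2.mul_left_cancel h2').symm
      right_inv := by
        intro v
        funext p
        apply Subtype.ext
        simp [p.2] }
  rw [Nat.card_congr e, Nat.card_fun, card_lowerPairs]

lemma card_eq_of_fibers {α β : Type*} [Finite α] [Finite β] (f : α → β) (n : ℕ)
    (h : ∀ b, Nat.card {a // f a = b} = n) :
    Nat.card α = n * Nat.card β := by
  classical
  cases nonempty_fintype α
  cases nonempty_fintype β
  rw [← Nat.card_congr (Equiv.sigmaFiberEquiv f), Nat.card_eq_fintype_card,
    Fintype.card_sigma]
  have : ∀ b : β, Fintype.card {a // f a = b} = n := fun b => by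
    rw [← Nat.card_eq_fintype_card]; exact h b
  simp [this, Finset.sum_const, Nat.card_eq_fintype_card, mul_comm]

lemma card_orth_congr {A B : Type*} [CommRing A] [CommRing B] {d : ℕ}
    (e : A ≃+* B) (SA : Matrix (Fin d) (Fin d) A) :
    Nat.card {g : Matrix (Fin d) (Fin d) A // gᵀ * SA * g = SA}
      = Nat.card {g : Matrix (Fin d) (Fin d) B // gᵀ * (SA.map e) * g = SA.map e} := by
  apply Nat.card_congr
  set E := RingEquiv.mapMatrix (m := Fin d) e with hEdef
  refine E.toEquiv.subtypeEquiv fun g => ?_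
  have ht : E gᵀ = (E g)ᵀ := Matrix.transpose_map
  have hSAe : E SA = SA.map ⇑e := rfl
  constructor
  · intro hg
    show (E g)ᵀ * SA.map ⇑e * E g = SA.map ⇑e
    rw [← hSAe, ← ht, ← _root_.map_mul, ← _root_.map_mul, hg]
  · intro hg
    apply E.injective
    rw [_root_.map_mul, _root_.map_mul, ht, hSAe]
    exact hg


section C
variable {A B : Type*} [CommRing A] [CommRing B] (φ : A →+* B)

lemma ker_matrix_mul
    (hker2 : ∀ x y : A, φ x = 0 → φ y = 0 → x * y = 0)
    {d : ℕ} (P Q : Matrix (Fin d) (Fin d) A)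
    (hP : P.map φ = 0) (hQ : Q.map φ = 0) : P * Q = 0 := by
  rw [← Matrix.ext_iff] at hP hQ
  ext i j
  rw [Matrix.mul_apply, Matrix.zero_apply]
  refine Finset.sum_eq_zero fun l _ => hker2 _ _ ?_ ?_
  · simpa [Matrix.map_apply] using hP i l
  · simpa [Matrix.map_apply] using hQ l j

lemma orth_correct
    (hker2 : ∀ x y : A, φ x = 0 → φ y = 0 → x * y = 0)
    {d : ℕ} (SA h₀ M : Matrix (Fin d) (Fin d) A) (hSA : SAᵀ = SA)
    (hh : IsUnit (h₀ᵀ * SA).det) (hM : M.map φ = 0) :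
    (h₀ + (h₀ᵀ * SA)⁻¹ * M)ᵀ * SA * (h₀ + (h₀ᵀ * SA)⁻¹ * M)
      = h₀ᵀ * SA * h₀ + (Mᵀ + M)
    ∧ (h₀ + (h₀ᵀ * SA)⁻¹ * M).map φ = h₀.map φ := by
  set Z := (h₀ᵀ * SA)⁻¹ * M with hZ
  clear_value Z
  have hZmap : Z.map φ = 0 := by
    rw [hZ, Matrix.map_mul, hM, mul_zero]
  constructor
  · have e1 : h₀ᵀ * SA * Z = M := by
      rw [hZ]; exact Matrix.mul_nonsing_inv_cancel_left _ _ hh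
    have e2 : Zᵀ * SA * h₀ = Mᵀ := by
      have h' : (h₀ᵀ * SA * Z)ᵀ = Zᵀ * SA * h₀ := by
        rw [transpose_mul, transpose_mul, transpose_transpose, hSA, ← mul_assoc]
      rw [← h', e1]
    have e3 : Zᵀ * (SA * Z) = 0 := by
      refine ker_matrix_mul φ hker2 _ _ ?_ ?_
      · rw [Matrix.transpose_map, hZmap, transpose_zero]
      · rw [Matrix.map_mul, hZmap, mul_zero]
    have e3' : Zᵀ * SA * Z = 0 := by rw [mul_assoc, e3]
    have expand : (h₀ + Z)ᵀ * SA * (h₀ + Z)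
        = h₀ᵀ * SA * h₀ + (Zᵀ * SA * h₀ + (h₀ᵀ * SA * Z + Zᵀ * SA * Z)) := by
      rw [transpose_add]
      noncomm_ring
    rw [expand, e1, e2, e3', add_zero]
  · rw [Matrix.map_add _ (fun a b => map_add φ a b), hZmap, add_zero]

lemma entry0 {d : ℕ} (P : Matrix (Fin d) (Fin d) A) (hP : P.map φ = 0) :
    ∀ i j, φ (P i j) = 0 := by
  intro i j
  rw [← Matrix.ext_iff] at hP
  simpa [Matrix.map_apply] using hP i j

lemma orth_step [Finite A] [Finite B]
    (hsurj : Function.Surjective φ)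
    (hker2 : ∀ x y : A, φ x = 0 → φ y = 0 → x * y = 0)
    (hunit : ∀ a : A, IsUnit (φ a) → IsUnit a)
    (h2 : IsUnit (2 : A))
    {d : ℕ} (SA : Matrix (Fin d) (Fin d) A) (hSA : SAᵀ = SA) (hdet : IsUnit SA.det) :
    Nat.card {g : Matrix (Fin d) (Fin d) A // gᵀ * SA * g = SA}
      = Nat.card {x : A // φ x = 0} ^ (d * (d - 1) / 2)
        * Nat.card {g : Matrix (Fin d) (Fin d) B // gᵀ * (SA.map φ) * g = SA.map φ} := by
  classical
  have hSB_symm : (SA.map φ)ᵀ = SA.map φ := by rw [← Matrix.transpose_map, hSA]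
  have hdetSB : IsUnit (SA.map φ).det := by
    have hd : (SA.map φ).det = φ SA.det := ((RingHom.map_det φ SA).symm : (φ.mapMatrix SA).det = φ SA.det)
    rw [hd]; exact hdet.map φ
  have Fmap : ∀ g : Matrix (Fin d) (Fin d) A, gᵀ * SA * g = SA →
      (g.map φ)ᵀ * SA.map φ * (g.map φ) = SA.map φ := by
    intro g hg
    rw [← Matrix.transpose_map, ← Matrix.map_mul, ← Matrix.map_mul, hg]
  set F : {g : Matrix (Fin d) (Fin d) A // gᵀ * SA * g = SA}
      → {g : Matrix (Fin d) (Fin d) B // gᵀ * (SA.map φ) * g = SA.map φ} :=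
    fun g => ⟨g.1.map φ, Fmap g.1 g.2⟩ with hF
  refine card_eq_of_fibers F _ fun y => ?_
  -- det y is a unit
  have hdy : IsUnit y.1.det := by
    have h := congrArg Matrix.det y.2
    rw [det_mul, det_mul, det_transpose] at h
    have h1 : y.1.det * y.1.det * (SA.map φ).det = 1 * (SA.map φ).det := by
      rw [one_mul]; linear_combination h
    exact IsUnit.of_mul_eq_one _ (hdetSB.mul_right_cancel h1)
  -- choose an entrywise lift h₀ of y
  choose h0f hh0 using fun (i j : Fin d) => hsurj (y.1 i j)
  set h₀ : Matrix (Fin d) (Fin d) A := Matrix.of h0f with hh₀def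
  have hmap0 : h₀.map φ = y.1 := by
    ext i j; exact hh0 i j
  have hdeth₀ : IsUnit h₀.det := by
    refine hunit _ ?_
    have hd : φ h₀.det = y.1.det := by
      rw [RingHom.map_det φ h₀, RingHom.mapMatrix_apply, hmap0]
    rw [hd]; exact hdy
  have hdeth₀SA : IsUnit (h₀ᵀ * SA).det := by
    rw [det_mul, det_transpose]; exact hdeth₀.mul hdet
  -- the symmetric error term E and the correction M
  set E := h₀ᵀ * SA * h₀ - SA with hE
  have hEmap : E.map φ = 0 := by
    rw [hE, Matrix.map_sub _ (fun a b => map_sub φ a b)]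
    have h1 : (h₀ᵀ * SA * h₀).map φ = y.1ᵀ * SA.map φ * y.1 := by
      rw [Matrix.map_mul, Matrix.map_mul, Matrix.transpose_map, hmap0]
    rw [h1, y.2, sub_self]
  have hEsymm : Eᵀ = E := by
    rw [hE, transpose_sub, transpose_mul, transpose_mul, transpose_transpose, hSA,
      ← mul_assoc]
  set c : A := ↑h2.unit⁻¹ with hc
  have hc2 : 2 * c = 1 := by
    rw [hc]; exact h2.mul_val_inv
  set M : Matrix (Fin d) (Fin d) A := -(c • E) with hM
  have hMmap : M.map φ = 0 := by
    ext i j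
    have h0 : φ (E i j) = 0 := entry0 φ E hEmap i j
    simp [hM, Matrix.map_apply, smul_eq_mul, h0]
  have hMskew : Mᵀ + M = -E := by
    rw [hM, transpose_neg, transpose_smul, hEsymm, ← neg_add, ← add_smul, ← two_mul,
      hc2, one_smul]
  -- the good lift h
  set h := h₀ + (h₀ᵀ * SA)⁻¹ * M with hh
  obtain ⟨hrel', hmap'⟩ := orth_correct φ hker2 SA h₀ M hSA hdeth₀SA hMmap
  have hrel : hᵀ * SA * h = SA := by
    rw [hh, hrel', hMskew, hE]
    abel
  have hmaph : h.map φ = y.1 := by rw [hh, hmap', hmap0]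
  have hdeth : IsUnit h.det := by
    refine hunit _ ?_
    have hd : φ h.det = y.1.det := by
      rw [RingHom.map_det φ h, RingHom.mapMatrix_apply, hmaph]
    rw [hd]; exact hdy
  have hdethSA : IsUnit (hᵀ * SA).det := by
    rw [det_mul, det_transpose]; exact hdeth.mul hdet
  -- each fiber is equivalent to the skew matrices with entries in the kernel
  have hsubmap : ∀ a : {g : Matrix (Fin d) (Fin d) A // gᵀ * SA * g = SA}, F a = y →
      (a.1 - h).map φ = 0 := by
    intro a ha
    have hav : a.1.map φ = y.1 := congrArg Subtype.val ha
    rw [Matrix.map_sub _ (fun u v => map_sub φ u v), hav, hmaph, sub_self]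
  have fibEquiv : {a : {g : Matrix (Fin d) (Fin d) A // gᵀ * SA * g = SA} // F a = y}
      ≃ {N : Matrix (Fin d) (Fin d) A // (∀ i j, N i j ∈ ({x | φ x = 0} : Set A)) ∧ Nᵀ = -N} := by
    refine
      { toFun := fun a => ⟨hᵀ * SA * (a.1.1 - h), ?_, ?_⟩
        invFun := fun N => ⟨⟨h + (hᵀ * SA)⁻¹ * N.1, ?_⟩, ?_⟩
        left_inv := ?_
        right_inv := ?_ }
    · -- entries in kernel
      intro i j
      have hm : (hᵀ * SA * (a.1.1 - h)).map φ = 0 := by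
        rw [mul_assoc, Matrix.map_mul, Matrix.map_mul, hsubmap a.1 a.2, mul_zero, mul_zero]
      exact entry0 φ _ hm i j
    · -- skew
      have hsub0 : (a.1.1ᵀ - hᵀ) * (SA * (a.1.1 - h)) = 0 := by
        refine ker_matrix_mul φ hker2 _ _ ?_ ?_
        · rw [← transpose_sub, Matrix.transpose_map, hsubmap a.1 a.2, transpose_zero]
        · rw [Matrix.map_mul, hsubmap a.1 a.2, mul_zero]
      have e2 : a.1.1ᵀ * SA * h + hᵀ * SA * a.1.1 = SA + SA := by
        calc a.1.1ᵀ * SA * h + hᵀ * SA * a.1.1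
            = (a.1.1ᵀ * SA * a.1.1 + hᵀ * SA * h) - (a.1.1ᵀ - hᵀ) * (SA * (a.1.1 - h)) := by
              noncomm_ring
          _ = SA + SA := by rw [hsub0, a.1.2, hrel, sub_zero]
      have ht' : (hᵀ * SA * (a.1.1 - h))ᵀ = (a.1.1ᵀ - hᵀ) * SA * h := by
        rw [transpose_mul, transpose_mul, transpose_transpose, hSA, transpose_sub,
          ← mul_assoc]
      rw [eq_neg_iff_add_eq_zero, ht']
      calc (a.1.1ᵀ - hᵀ) * SA * h + hᵀ * SA * (a.1.1 - h)
          = (a.1.1ᵀ * SA * h + hᵀ * SA * a.1.1) - (hᵀ * SA * h + hᵀ * SA * h) := by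
            noncomm_ring
        _ = 0 := by rw [e2, hrel, sub_self]
    · -- relation for invFun
      have hNmap : N.1.map φ = 0 := by
        ext i j
        simpa [Matrix.map_apply] using N.2.1 i j
      obtain ⟨r1, r2⟩ := orth_correct φ hker2 SA h N.1 hSA hdethSA hNmap
      rw [r1, hrel, N.2.2, neg_add_cancel, add_zero]
    · -- invFun lands in the fiber
      apply Subtype.ext
      show (h + (hᵀ * SA)⁻¹ * N.1).map φ = y.1
      have hNmap : N.1.map φ = 0 := by
        ext i j
        simpa [Matrix.map_apply] using N.2.1 i j
      obtain ⟨r1, r2⟩ := orth_correct φ hker2 SA h N.1 hSA hdethSA hNmap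
      rw [r2, hmaph]
    · -- left inverse
      intro a
      apply Subtype.ext
      apply Subtype.ext
      show h + (hᵀ * SA)⁻¹ * (hᵀ * SA * (a.1.1 - h)) = a.1.1
      rw [Matrix.nonsing_inv_mul_cancel_left _ _ hdethSA]
      abel
    · -- right inverse
      intro N
      apply Subtype.ext
      show hᵀ * SA * (h + (hᵀ * SA)⁻¹ * N.1 - h) = N.1
      rw [add_sub_cancel_left, Matrix.mul_nonsing_inv_cancel_left _ _ hdethSA]
  rw [Nat.card_congr fibEquiv,
    skew_card d ({x | φ x = 0} : Set A) (fun x hx => by simp_all) (by simp) h2]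
  rfl

end C


section DVR
variable (R : Type*) [CommRing R] [IsDomain R] [IsDiscreteValuationRing R]

lemma two_unit_aux (q : ℕ) (hq : Odd q)
    (hres : Nat.card (R ⧸ IsLocalRing.maximalIdeal R) = q) : IsUnit (2 : R) := by
  haveI : Nontrivial (R ⧸ IsLocalRing.maximalIdeal R) :=
    Ideal.Quotient.nontrivial_iff.mpr (Ideal.IsMaximal.ne_top (IsLocalRing.maximalIdeal.isMaximal R))
  haveI : Finite (R ⧸ IsLocalRing.maximalIdeal R) := by
    apply Nat.finite_of_card_ne_zero
    rw [hres]
    rintro rfl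
    simp [Nat.odd_iff] at hq
  by_contra h
  have hm : (2 : R) ∈ IsLocalRing.maximalIdeal R := (IsLocalRing.mem_maximalIdeal 2).mpr h
  have h2' : (2 : R ⧸ IsLocalRing.maximalIdeal R) = 0 := by
    have := Ideal.Quotient.eq_zero_iff_mem.mpr hm
    rwa [map_ofNat] at this
  have hq0 : ((q : ℕ) : R ⧸ IsLocalRing.maximalIdeal R) = 0 := by
    have := card_nsmul_eq_zero' (G := R ⧸ IsLocalRing.maximalIdeal R)
      (x := (1 : R ⧸ IsLocalRing.maximalIdeal R))
    rw [hres, nsmul_eq_mul, mul_one] at this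
    exact this
  obtain ⟨m, hm'⟩ := hq
  rw [hm'] at hq0
  push_cast at hq0
  rw [h2', zero_mul, zero_add] at hq0
  exact one_ne_zero hq0

lemma card_quot_pow_aux (j : ℕ) :
    Nat.card (R ⧸ (IsLocalRing.maximalIdeal R) ^ j)
      = (Nat.card (R ⧸ IsLocalRing.maximalIdeal R)) ^ j := by
  haveI : (IsLocalRing.maximalIdeal R).IsPrime :=
    (IsLocalRing.maximalIdeal.isMaximal R).isPrime
  have hbot : IsLocalRing.maximalIdeal R ≠ ⊥ := IsDiscreteValuationRing.not_a_field R
  have h := cardQuot_pow_of_prime (S := R) (P := IsLocalRing.maximalIdeal R) hbot (i := j)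
  rw [Submodule.cardQuot_apply, Submodule.cardQuot_apply] at h
  exact h

lemma unit_lift_aux (n : ℕ) (x : R)
    (h : IsUnit (Ideal.Quotient.mk ((IsLocalRing.maximalIdeal R) ^ n) x)) (hn : 1 ≤ n) :
    IsUnit x := by
  by_contra hx
  have hxm : x ∈ IsLocalRing.maximalIdeal R := (IsLocalRing.mem_maximalIdeal x).mpr hx
  obtain ⟨b, hb⟩ := isUnit_iff_exists_inv.mp h
  obtain ⟨y, rfl⟩ := Ideal.Quotient.mk_surjective b
  rw [← _root_.map_mul, ← map_one (Ideal.Quotient.mk ((IsLocalRing.maximalIdeal R) ^ n))] at hb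
  have hsub : x * y - 1 ∈ (IsLocalRing.maximalIdeal R) ^ n :=
    Ideal.Quotient.eq.mp hb
  have hsub' : x * y - 1 ∈ IsLocalRing.maximalIdeal R :=
    Ideal.pow_le_self (by omega) hsub
  have hone : (1 : R) ∈ IsLocalRing.maximalIdeal R := by
    have := Ideal.sub_mem _ (Ideal.mul_mem_right y _ hxm) hsub'
    simpa using this
  exact (Ideal.IsMaximal.ne_top (IsLocalRing.maximalIdeal.isMaximal R))
    ((Ideal.eq_top_iff_one _).mpr hone)

end DVR


/-- **Lemma A.2, first identity.** Let `R` be a discrete valuation ring with maximal ideal `𝔪`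
whose residue field is finite of odd cardinality `q`, and let `S` be a symmetric `d × d` matrix
over `R` with unit determinant. Then the orthogonal group of the reduction of `S` modulo `𝔪^θ`
is finite of cardinality `q^((θ-1)·d(d-1)/2) · |O_S(R/𝔪)|`. -/
theorem orthogonal_group_card_over_dvr_quotient
    (R : Type*) [CommRing R] [IsDomain R] [IsDiscreteValuationRing R]
    (q : ℕ) (hq : Odd q)
    (hres : Nat.card (R ⧸ IsLocalRing.maximalIdeal R) = q)
    (d θ : ℕ) (hd : 1 ≤ d) (hθ : 1 ≤ θ)
    (S : Matrix (Fin d) (Fin d) R) (hsymm : Sᵀ = S) (hdet : IsUnit S.det) :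
    ∀ (Sθ : Matrix (Fin d) (Fin d) (R ⧸ IsLocalRing.maximalIdeal R ^ θ))
      (S₁ : Matrix (Fin d) (Fin d) (R ⧸ IsLocalRing.maximalIdeal R)),
      Sθ = S.map (Ideal.Quotient.mk (IsLocalRing.maximalIdeal R ^ θ)) →
      S₁ = S.map (Ideal.Quotient.mk (IsLocalRing.maximalIdeal R)) →
      Finite {g : Matrix (Fin d) (Fin d)
          (R ⧸ IsLocalRing.maximalIdeal R ^ θ) // gᵀ * Sθ * g = Sθ} ∧
      Nat.card {g : Matrix (Fin d) (Fin d)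
          (R ⧸ IsLocalRing.maximalIdeal R ^ θ) // gᵀ * Sθ * g = Sθ} =
        q ^ ((θ - 1) * (d * (d - 1) / 2)) *
          Nat.card {g : Matrix (Fin d) (Fin d)
            (R ⧸ IsLocalRing.maximalIdeal R) // gᵀ * S₁ * g = S₁} := by
  intro Sθ S₁ hSθ hS₁
  subst hSθ hS₁
  have hq0 : q ≠ 0 := by rintro rfl; simp [Nat.odd_iff] at hq
  have hcard : ∀ j : ℕ, Nat.card (R ⧸ (IsLocalRing.maximalIdeal R) ^ j) = q ^ j := by
    intro j; rw [card_quot_pow_aux, hres]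
  have hfin : ∀ j : ℕ, Finite (R ⧸ (IsLocalRing.maximalIdeal R) ^ j) := by
    intro j
    apply Nat.finite_of_card_ne_zero
    rw [hcard]; exact pow_ne_zero _ hq0
  haveI hfin1 : Finite (R ⧸ IsLocalRing.maximalIdeal R) :=
    Nat.finite_of_card_ne_zero (by rw [hres]; exact hq0)
  have h2R : IsUnit (2 : R) := two_unit_aux R q hq hres
  have claim : ∀ k : ℕ,
      Nat.card {g : Matrix (Fin d) (Fin d) (R ⧸ (IsLocalRing.maximalIdeal R) ^ (k + 1)) //
          gᵀ * S.map (Ideal.Quotient.mk ((IsLocalRing.maximalIdeal R) ^ (k + 1))) * g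
            = S.map (Ideal.Quotient.mk ((IsLocalRing.maximalIdeal R) ^ (k + 1)))}
        = q ^ (k * (d * (d - 1) / 2)) *
          Nat.card {g : Matrix (Fin d) (Fin d) (R ⧸ IsLocalRing.maximalIdeal R) //
            gᵀ * S.map (Ideal.Quotient.mk (IsLocalRing.maximalIdeal R)) * g
              = S.map (Ideal.Quotient.mk (IsLocalRing.maximalIdeal R))} := by
    intro k
    induction k with
    | zero =>
      rw [zero_mul, pow_zero, one_mul]
      have hm : (S.map (Ideal.Quotient.mk ((IsLocalRing.maximalIdeal R) ^ 1))).map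
          ⇑(Ideal.quotEquivOfEq (pow_one (IsLocalRing.maximalIdeal R)))
          = S.map (Ideal.Quotient.mk (IsLocalRing.maximalIdeal R)) := by
        ext i j
        simp [Matrix.map_apply]
      rw [card_orth_congr (Ideal.quotEquivOfEq (pow_one (IsLocalRing.maximalIdeal R)))
        (S.map (Ideal.Quotient.mk ((IsLocalRing.maximalIdeal R) ^ 1))), hm]
    | succ k ih =>
      haveI := hfin (k + 2)
      haveI := hfin (k + 1)
      set φ : (R ⧸ (IsLocalRing.maximalIdeal R) ^ (k + 2))
          →+* (R ⧸ (IsLocalRing.maximalIdeal R) ^ (k + 1)) :=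
        Ideal.Quotient.factor
          (Ideal.pow_le_pow_right (by omega)) with hφ
      have hsurj : Function.Surjective φ := by
        intro b
        obtain ⟨x, rfl⟩ := Ideal.Quotient.mk_surjective b
        exact ⟨Ideal.Quotient.mk _ x, Ideal.Quotient.factor_mk _ x⟩
      have hker2 : ∀ x y : (R ⧸ (IsLocalRing.maximalIdeal R) ^ (k + 2)),
          φ x = 0 → φ y = 0 → x * y = 0 := by
        intro x y hx hy
        obtain ⟨a, rfl⟩ := Ideal.Quotient.mk_surjective x
        obtain ⟨b, rfl⟩ := Ideal.Quotient.mk_surjective y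
        rw [hφ, Ideal.Quotient.factor_mk, Ideal.Quotient.eq_zero_iff_mem] at hx hy
        rw [← _root_.map_mul, Ideal.Quotient.eq_zero_iff_mem]
        have hab : a * b ∈ (IsLocalRing.maximalIdeal R) ^ (k + 1)
            * (IsLocalRing.maximalIdeal R) ^ (k + 1) := Ideal.mul_mem_mul hx hy
        rw [← pow_add] at hab
        exact Ideal.pow_le_pow_right (by omega) hab
      have hunit : ∀ a : (R ⧸ (IsLocalRing.maximalIdeal R) ^ (k + 2)),
          IsUnit (φ a) → IsUnit a := by
        intro a ha
        obtain ⟨x, rfl⟩ := Ideal.Quotient.mk_surjective a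
        rw [hφ, Ideal.Quotient.factor_mk] at ha
        exact (unit_lift_aux R (k + 1) x ha (by omega)).map _
      have h2u : IsUnit (2 : R ⧸ (IsLocalRing.maximalIdeal R) ^ (k + 2)) := by
        have := h2R.map (Ideal.Quotient.mk ((IsLocalRing.maximalIdeal R) ^ (k + 2)))
        rwa [map_ofNat] at this
      have hSAsymm : (S.map (Ideal.Quotient.mk ((IsLocalRing.maximalIdeal R) ^ (k + 2))))ᵀ
          = S.map (Ideal.Quotient.mk ((IsLocalRing.maximalIdeal R) ^ (k + 2))) := by
        rw [← Matrix.transpose_map, hsymm]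
      have hSAdet : IsUnit (S.map (Ideal.Quotient.mk ((IsLocalRing.maximalIdeal R) ^ (k + 2)))).det := by
        have hd2 : (S.map (Ideal.Quotient.mk ((IsLocalRing.maximalIdeal R) ^ (k + 2)))).det
            = (Ideal.Quotient.mk ((IsLocalRing.maximalIdeal R) ^ (k + 2))) S.det :=
          ((RingHom.map_det _ S).symm :
            ((Ideal.Quotient.mk ((IsLocalRing.maximalIdeal R) ^ (k + 2))).mapMatrix S).det = _)
        rw [hd2]
        exact hdet.map _
      have hcomp : (S.map (Ideal.Quotient.mk ((IsLocalRing.maximalIdeal R) ^ (k + 2)))).map φ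
          = S.map (Ideal.Quotient.mk ((IsLocalRing.maximalIdeal R) ^ (k + 1))) := by
        ext i j
        simp [Matrix.map_apply, hφ, Ideal.Quotient.factor_mk]
      have hkercard : Nat.card {x : R ⧸ (IsLocalRing.maximalIdeal R) ^ (k + 2) // φ x = 0} = q := by
        set K := AddMonoidHom.ker φ.toAddMonoidHom with hK
        have h1 : Nat.card (R ⧸ (IsLocalRing.maximalIdeal R) ^ (k + 2))
            = Nat.card ((R ⧸ (IsLocalRing.maximalIdeal R) ^ (k + 2)) ⧸ K) * Nat.card K :=
          AddSubgroup.card_eq_card_quotient_mul_card_addSubgroup K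
        have h2 : Nat.card ((R ⧸ (IsLocalRing.maximalIdeal R) ^ (k + 2)) ⧸ K)
            = Nat.card (R ⧸ (IsLocalRing.maximalIdeal R) ^ (k + 1)) :=
          Nat.card_congr
            (QuotientAddGroup.quotientKerEquivOfSurjective φ.toAddMonoidHom hsurj).toEquiv
        rw [hcard, h2, hcard] at h1
        have h3 : Nat.card K = q := by
          apply Nat.eq_of_mul_eq_mul_left (Nat.pos_of_ne_zero (pow_ne_zero (k + 1) hq0))
          rw [← h1, pow_succ]
        rw [← h3]
        exact Nat.card_congr (Equiv.subtypeEquivRight fun x => Iff.rfl)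
      calc Nat.card {g : Matrix (Fin d) (Fin d) (R ⧸ (IsLocalRing.maximalIdeal R) ^ (k + 2)) //
              gᵀ * S.map (Ideal.Quotient.mk ((IsLocalRing.maximalIdeal R) ^ (k + 2))) * g
                = S.map (Ideal.Quotient.mk ((IsLocalRing.maximalIdeal R) ^ (k + 2)))}
          = q ^ (d * (d - 1) / 2) *
            Nat.card {g : Matrix (Fin d) (Fin d) (R ⧸ (IsLocalRing.maximalIdeal R) ^ (k + 1)) //
              gᵀ * S.map (Ideal.Quotient.mk ((IsLocalRing.maximalIdeal R) ^ (k + 1))) * g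
                = S.map (Ideal.Quotient.mk ((IsLocalRing.maximalIdeal R) ^ (k + 1)))} := by
            rw [orth_step φ hsurj hker2 hunit h2u _ hSAsymm hSAdet, hkercard, hcomp]
        _ = q ^ ((k + 1) * (d * (d - 1) / 2)) *
            Nat.card {g : Matrix (Fin d) (Fin d) (R ⧸ IsLocalRing.maximalIdeal R) //
              gᵀ * S.map (Ideal.Quotient.mk (IsLocalRing.maximalIdeal R)) * g
                = S.map (Ideal.Quotient.mk (IsLocalRing.maximalIdeal R))} := by
            rw [ih, ← mul_assoc, ← pow_add]
            congr 2
            ring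
  obtain ⟨k, rfl⟩ : ∃ k, θ = k + 1 := ⟨θ - 1, (Nat.succ_pred_eq_of_pos hθ).symm⟩
  haveI := hfin (k + 1)
  refine ⟨inferInstance, ?_⟩
  simpa using claim k
end

section
/- Let n ≥ 1, equip ℝⁿ with its standard inner product and Lebesgue measure, let α₁, …, α_N ∈ ℝⁿ and d₁, …, d_N be natural numbers, and define β̃(λ) = ∏_{i=1}^{N} (1 + |⟨λ, α_i⟩|)^{d_i}. Then for every c > 0 there exist constants 0 < c₁ ≤ c₂, depending only on c and on the family (α_i, d_i), such that for every ν ∈ ℝⁿ: c₁ · β̃(ν) ≤ ∫_{{μ : ‖μ − ν‖ ≤ c}} β̃(μ) dμ ≤ c₂ · β̃(ν). -/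
open scoped RealInnerProductSpace
open MeasureTheory

/-- **Comparison (3.5).** For vectors `α₁, …, α_N ∈ ℝⁿ` and exponents `d₁, …, d_N ∈ ℕ`, the
majorant `β̃(λ) = ∏ᵢ (1 + |⟨λ, αᵢ⟩|)^(dᵢ)` satisfies, for every `c > 0`,
`∫_{‖μ - ν‖ ≤ c} β̃(μ) dμ ≍ β̃(ν)` uniformly in `ν ∈ ℝⁿ`, i.e. there are constants
`0 < c₁ ≤ c₂` depending only on `c` and `(αᵢ, dᵢ)` squeezing the integral between
`c₁ β̃(ν)` and `c₂ β̃(ν)`. -/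
theorem spectral_majorant_ball_integral_comparison
    (n : ℕ) (hn : 1 ≤ n) (N : ℕ) (α : Fin N → EuclideanSpace ℝ (Fin n))
    (d : Fin N → ℕ) (c : ℝ) (hc : 0 < c) :
    ∃ c₁ c₂ : ℝ, 0 < c₁ ∧ c₁ ≤ c₂ ∧ ∀ ν : EuclideanSpace ℝ (Fin n),
      c₁ * (∏ i, (1 + |⟪ν, α i⟫|) ^ d i) ≤
          (∫ μ in Metric.closedBall ν c, ∏ i, (1 + |⟪μ, α i⟫|) ^ d i) ∧
        (∫ μ in Metric.closedBall ν c, ∏ i, (1 + |⟪μ, α i⟫|) ^ d i) ≤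
          c₂ * ∏ i, (1 + |⟪ν, α i⟫|) ^ d i := by
  classical
  set β : EuclideanSpace ℝ (Fin n) → ℝ := fun μ => ∏ i, (1 + |⟪μ, α i⟫|) ^ d i with hβ
  have hβnonneg : ∀ μ : EuclideanSpace ℝ (Fin n), 0 ≤ β μ := by
    intro μ
    exact Finset.prod_nonneg fun i _ => pow_nonneg (by positivity) _
  set K : ℝ := ∏ i, (1 + c * ‖α i‖) ^ d i with hKdef
  have hK1 : (1 : ℝ) ≤ K := by
    rw [hKdef]
    calc (1:ℝ) = ∏ _i : Fin N, 1 := by simp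
      _ ≤ ∏ i, (1 + c * ‖α i‖) ^ d i := by
          apply Finset.prod_le_prod (fun i _ => zero_le_one)
          intro i _
          apply one_le_pow₀
          nlinarith [norm_nonneg (α i), hc]
  have hKpos : 0 < K := lt_of_lt_of_le one_pos hK1
  have key : ∀ ν μ : EuclideanSpace ℝ (Fin n), ‖μ - ν‖ ≤ c → β μ ≤ K * β ν := by
    intro ν μ h
    have : K * β ν = ∏ i, ((1 + c * ‖α i‖) * (1 + |⟪ν, α i⟫|)) ^ d i := by
      rw [hKdef, hβ, ← Finset.prod_mul_distrib]
      simp [mul_pow]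
    rw [this]
    apply Finset.prod_le_prod
    · intro i _; exact pow_nonneg (by positivity) _
    · intro i _
      apply pow_le_pow_left₀ (by positivity)
      have h1 : ⟪μ, α i⟫ = ⟪ν, α i⟫ + ⟪μ - ν, α i⟫ := by
        rw [inner_sub_left]; ring
      have h2 : |⟪μ - ν, α i⟫| ≤ c * ‖α i‖ := by
        calc |⟪μ - ν, α i⟫| ≤ ‖μ - ν‖ * ‖α i‖ := abs_real_inner_le_norm _ _
          _ ≤ c * ‖α i‖ := mul_le_mul_of_nonneg_right h (norm_nonneg _)
      have h3 : |⟪μ, α i⟫| ≤ |⟪ν, α i⟫| + c * ‖α i‖ := by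
        rw [h1]; exact le_trans (abs_add_le _ _) (by linarith)
      nlinarith [abs_nonneg ⟪ν, α i⟫, norm_nonneg (α i), hc, mul_nonneg (mul_nonneg hc.le (norm_nonneg (α i))) (abs_nonneg ⟪ν, α i⟫)]
  have hβcont : Continuous β := by
    apply continuous_finset_prod
    intro i _
    exact ((continuous_const.add
      ((continuous_id.inner continuous_const).abs)).pow _)
  set V : ℝ := (volume (Metric.closedBall (0 : EuclideanSpace ℝ (Fin n)) c)).toReal with hVdef
  have hVpos : 0 < V := by
    apply ENNReal.toReal_pos
    · exact (Metric.measure_closedBall_pos volume _ hc).ne'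
    · exact measure_closedBall_lt_top.ne
  have hVol : ∀ ν : EuclideanSpace ℝ (Fin n), volume (Metric.closedBall ν c) = volume (Metric.closedBall (0 : EuclideanSpace ℝ (Fin n)) c) := by
    intro ν
    rw [Measure.addHaar_closedBall _ _ hc.le, Measure.addHaar_closedBall _ _ hc.le]
  refine ⟨K⁻¹ * V, K * V, by positivity, ?_, ?_⟩
  · have h0 : K * K⁻¹ = 1 := mul_inv_cancel₀ hKpos.ne'
    have h2 : K⁻¹ ≤ K := by nlinarith [inv_nonneg.mpr hKpos.le]
    exact mul_le_mul_of_nonneg_right h2 hVpos.le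
  intro ν
  have hInt : IntegrableOn β (Metric.closedBall ν c) volume :=
    hβcont.continuousOn.integrableOn_compact (isCompact_closedBall ν c)
  have hmeas : MeasurableSet (Metric.closedBall ν c) := measurableSet_closedBall
  have hVν : (volume (Metric.closedBall ν c)).toReal = V := by rw [hVol ν, hVdef]
  constructor
  · have hlow : ∀ μ ∈ Metric.closedBall ν c, K⁻¹ * β ν ≤ β μ := by
      intro μ hμ
      rw [Metric.mem_closedBall, dist_eq_norm] at hμ
      have := key μ ν (by rwa [norm_sub_rev])
      rw [inv_mul_le_iff₀ hKpos]
      linarith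
    have h1 : ∫ _ in Metric.closedBall ν c, (K⁻¹ * β ν) ≤ ∫ μ in Metric.closedBall ν c, β μ :=
      setIntegral_mono_on (integrableOn_const measure_closedBall_lt_top.ne) hInt hmeas hlow
    rw [setIntegral_const, measureReal_def, hVν, smul_eq_mul] at h1
    calc K⁻¹ * V * β ν = V * (K⁻¹ * β ν) := by ring
      _ ≤ _ := h1
  · have hup : ∀ μ ∈ Metric.closedBall ν c, β μ ≤ K * β ν := by
      intro μ hμ
      rw [Metric.mem_closedBall, dist_eq_norm] at hμ
      exact key ν μ hμ
    have h1 : ∫ μ in Metric.closedBall ν c, β μ ≤ ∫ _ in Metric.closedBall ν c, (K * β ν) :=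
      setIntegral_mono_on hInt (integrableOn_const measure_closedBall_lt_top.ne) hmeas hup
    rw [setIntegral_const, measureReal_def, hVν, smul_eq_mul] at h1
    calc (∫ μ in Metric.closedBall ν c, β μ) ≤ V * (K * β ν) := h1
      _ = K * V * β ν := by ring
end

section
/- Let G be a locally compact, second-countable Hausdorff topological group with left Haar measure μ, let Γ be a discrete (hence countable) subgroup of G, and let D ⊆ G be a measurable fundamental domain for the action of Γ on G by left multiplication. Let (f_i)_{i∈I} be a countable family of measurable functions G → ℂ which are left Γ-invariant (f_i(γx) = f_i(x) for all γ ∈ Γ, x ∈ G), square-integrable on D, and orthonormal: ∫_D f_i(x) · conj(f_j(x)) dμ(x) = 1 if i = j and 0 otherwise. Let k : G → ℂ be continuous with compact support, and for g ∈ G set (R(k)f_i)(g) = ∫_G k(x) f_i(gx) dμ(x). Then for every g ∈ G: ∑_{i∈I} |(R(k)f_i)(g)|² ≤ ∑_{γ∈Γ} (k ⋆ k^∨)(g⁻¹ γ g), where the right-hand sum has only finitely many nonzero terms. -/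
open MeasureTheory Set Filter Topology
open scoped Pointwise ENNReal NNReal

set_option maxHeartbeats 1000000 in
/-- **Lemma 7.2.1 (pre-trace inequality).** Let `G` be a locally compact second-countable
Hausdorff topological group with left Haar measure `μ`, `Γ ≤ G` a discrete subgroup, and
`D` a measurable fundamental domain for the left action of `Γ` on `G`. Let `(fᵢ)` be a
countable orthonormal family of left `Γ`-invariant, measurable, square-integrable-on-`D`
functions, and `k` continuous with compact support. Then for every `g ∈ G`,
`∑ᵢ |R(k)fᵢ(g)|² ≤ ∑_{γ ∈ Γ} (k ⋆ k^∨)(g⁻¹ γ g)`, where the right-hand sum (which is real)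
has only finitely many nonzero terms. -/
theorem pretrace_inequality
    (G : Type*) [Group G] [TopologicalSpace G] [IsTopologicalGroup G]
    [LocallyCompactSpace G] [SecondCountableTopology G] [T2Space G]
    [MeasurableSpace G] [BorelSpace G]
    (μ : Measure G) [μ.IsHaarMeasure]
    (Γ : Subgroup G) [DiscreteTopology Γ]
    (D : Set G) (hD : IsFundamentalDomain Γ D μ)
    (ι : Type*) [Countable ι] [DecidableEq ι] (f : ι → G → ℂ)
    (hmeas : ∀ i, Measurable (f i))
    (hinv : ∀ (i : ι) (γ : Γ) (x : G), f i ((γ : G) * x) = f i x)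
    (hL2 : ∀ i, MemLp (f i) 2 (μ.restrict D))
    (horth : ∀ i j, (∫ x in D, f i x * (starRingEnd ℂ) (f j x) ∂μ) =
        if i = j then 1 else 0)
    (k : G → ℂ) (hk : Continuous k) (hksupp : HasCompactSupport k) (g : G) :
    {γ : Γ | (∫ x, k x * (starRingEnd ℂ) (k ((g⁻¹ * (γ : G) * g)⁻¹ * x)) ∂μ) ≠ 0}.Finite ∧
      (∑' i, ‖∫ x, k x * f i (g * x) ∂μ‖ ^ 2) ≤
        (∑' γ : Γ, ∫ x, k x * (starRingEnd ℂ) (k ((g⁻¹ * (γ : G) * g)⁻¹ * x)) ∂μ).re := by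
  classical
  haveI hΓcnt : Countable Γ := TopologicalSpace.separableSpace_iff_countable.mp inferInstance
  have hΓclosed : IsClosed (Γ : Set G) := Subgroup.isClosed_of_discrete
  -- finiteness of Γ ∩ compact
  have hfin : ∀ C : Set G, IsCompact C → {γ : Γ | (γ : G) ∈ C}.Finite := by
    intro C hC
    have hemb : Topology.IsClosedEmbedding (Subtype.val : Γ → G) :=
      hΓclosed.isClosedEmbedding_subtypeVal
    exact (hemb.isCompact_preimage hC).finite ⟨inferInstance⟩
  -- the translated kernel
  set κ : G → ℂ := fun y => k (g⁻¹ * y) with hκdef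
  have hκc : Continuous κ := hk.comp (continuous_const.mul continuous_id)
  have hκsupp : HasCompactSupport κ := by
    have h : κ = k ∘ (Homeomorph.mulLeft g⁻¹) := rfl
    rw [h]; exact hksupp.comp_homeomorph _
  set Q : Set G := tsupport κ with hQdef
  have hQcomp : IsCompact Q := hκsupp
  have hκQ : ∀ y, y ∉ Q → κ y = 0 := fun y hy => image_eq_zero_of_notMem_tsupport hy
  -- uniform bound on κ
  obtain ⟨y₀, hy₀⟩ :=
    (hκc.norm).exists_forall_ge_of_hasCompactSupport hκsupp.norm
  set M : ℝ := ‖κ y₀‖ with hMdef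
  have hM0 : 0 ≤ M := norm_nonneg _
  have hM : ∀ y, ‖κ y‖ ≤ M := hy₀
  -- the saturated support
  set E : Set G := ⋃ γ : Γ, (fun y => (γ : G) * y) ⁻¹' Q with hEdef
  have hEmeas : MeasurableSet E := by
    refine MeasurableSet.iUnion fun γ => ?_
    exact (isClosed_tsupport κ).measurableSet.preimage (measurable_const_mul _)
  have hκE : ∀ y : G, y ∉ E → ∀ γ : Γ, κ ((γ : G) * y) = 0 := by
    intro y hy γ
    refine hκQ _ fun hmem => hy ?_
    exact mem_iUnion.2 ⟨γ, hmem⟩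
  -- μ (D ∩ E) < ∞
  have hμDE : μ (D ∩ E) < ⊤ := by
    have h1 : μ (D ∩ E) ≤ ∑' γ : Γ, μ (D ∩ (fun y => (γ : G) * y) ⁻¹' Q) := by
      rw [hEdef, inter_iUnion]; exact measure_iUnion_le _
    have h2 : ∀ γ : Γ, μ (D ∩ (fun y => (γ : G) * y) ⁻¹' Q) = μ (Q ∩ γ • D) := by
      intro γ
      have hp : (fun y => (γ : G) * y) ⁻¹' Q = (γ : G)⁻¹ • Q := by
        ext z; simp [Set.mem_smul_set_iff_inv_smul_mem, smul_eq_mul]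
      rw [hp]
      have := measure_smul (μ := μ) (c := (γ : G)) (D ∩ (γ : G)⁻¹ • Q)
      rw [← this, smul_set_inter, smul_inv_smul, inter_comm]
      rfl
    calc μ (D ∩ E) ≤ ∑' γ : Γ, μ (D ∩ (fun y => (γ : G) * y) ⁻¹' Q) := h1
      _ = ∑' γ : Γ, μ (Q ∩ γ • D) := tsum_congr h2
      _ = μ Q := (hD.measure_eq_tsum' Q).symm
      _ < ⊤ := hQcomp.measure_lt_top
  -- uniform finite support of the γ-sums
  have hQQ : IsCompact (Q * Q⁻¹) := hQcomp.mul hQcomp.inv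
  set Fb : Finset Γ := (hfin _ hQQ).toFinset with hFbdef
  set N₀ : ℕ := Fb.card with hN₀def
  have hfs : ∀ y : G, ∃ F : Finset Γ, F.card ≤ N₀ ∧
      ∀ γ : Γ, γ ∉ F → κ ((γ : G) * y) = 0 := by
    intro y
    by_cases hy : y ∈ E
    · obtain ⟨γ₀, hγ₀⟩ : ∃ γ₀ : Γ, (γ₀ : G) * y ∈ Q := by
        simpa [hEdef] using hy
      refine ⟨Fb.image (· * γ₀), (Finset.card_image_le).trans le_rfl, ?_⟩
      intro γ hγ
      by_contra h
      have h1 : (γ : G) * y ∈ Q := subset_tsupport κ h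
      have h2 : ((γ : G) * (γ₀ : G)⁻¹) ∈ Q * Q⁻¹ := by
        refine ⟨(γ : G) * y, h1, ((γ₀ : G) * y)⁻¹, ?_, by group⟩
        simpa using hγ₀
      have h3 : (γ * γ₀⁻¹ : Γ) ∈ Fb := by
        rw [hFbdef, Set.Finite.mem_toFinset]
        simpa using h2
      exact hγ (Finset.mem_image.2 ⟨γ * γ₀⁻¹, h3, by group⟩)
    · exact ⟨∅, by simp, fun γ _ => hκE y hy γ⟩
  -- the automorphic kernel H
  set H : G → ℂ := fun y => ∑' γ : Γ, κ ((γ : G) * y) with hHdef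
  have hHnorm : ∀ y, ‖H y‖ ≤ N₀ * M := by
    intro y
    obtain ⟨F, hcard, hF⟩ := hfs y
    have hrep : H y = ∑ γ ∈ F, κ ((γ : G) * y) := tsum_eq_sum hF
    rw [hrep]
    calc ‖∑ γ ∈ F, κ ((γ : G) * y)‖ ≤ ∑ γ ∈ F, ‖κ ((γ : G) * y)‖ := norm_sum_le _ _
      _ ≤ F.card • M := Finset.sum_le_card_nsmul _ _ _ fun γ _ => hM _
      _ = (F.card : ℝ) * M := nsmul_eq_mul _ _
      _ ≤ N₀ * M := by
          exact mul_le_mul_of_nonneg_right (by exact_mod_cast hcard) hM0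
  have hH0 : ∀ y ∉ E, H y = 0 := by
    intro y hy
    have hz : ∀ γ : Γ, κ ((γ : G) * y) = 0 := hκE y hy
    simp only [hHdef, hz, tsum_zero]
  have hHcont : Continuous H := by
    rw [continuous_iff_continuousAt]
    intro z₀
    obtain ⟨V, hVc, hVn⟩ := exists_compact_mem_nhds z₀
    have hVQ : IsCompact (Q * V⁻¹) := hQcomp.mul hVc.inv
    set F : Finset Γ := (hfin _ hVQ).toFinset with hFdef
    have heq : ∀ y ∈ V, H y = ∑ γ ∈ F, κ ((γ : G) * y) := by
      intro y hy
      refine tsum_eq_sum ?_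
      intro γ hγ
      by_contra h
      have h1 : (γ : G) * y ∈ Q := subset_tsupport κ h
      have h2 : (γ : G) ∈ Q * V⁻¹ := ⟨(γ : G) * y, h1, y⁻¹, by simpa using hy, by group⟩
      exact hγ (by rw [hFdef, Set.Finite.mem_toFinset]; exact h2)
    have hcF : Continuous fun y => ∑ γ ∈ F, κ ((γ : G) * y) :=
      continuous_finset_sum _ fun γ _ => hκc.comp (continuous_const.mul continuous_id)
    refine hcF.continuousAt.congr ?_
    filter_upwards [hVn] with y hy using (heq y hy).symm
  have hHmeas : Measurable H := hHcont.measurable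
  have hHinv : ∀ (γ₀ : Γ) (y : G), H ((γ₀ : G) * y) = H y := by
    intro γ₀ y
    have h := (Equiv.mulRight γ₀).tsum_eq (fun γ : Γ => κ ((γ : G) * y))
    simp only [hHdef]
    rw [← h]
    refine tsum_congr fun γ => ?_
    simp [mul_assoc]
  -- pointwise bound on the nnnorm sums
  have hbound : ∀ y : G, (∑' γ : Γ, (‖κ ((γ : G) * y)‖₊ : ℝ≥0∞)) ≤
      ENNReal.ofReal (N₀ * M) * E.indicator (fun _ => (1 : ℝ≥0∞)) y := by
    intro y
    by_cases hy : y ∈ E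
    · obtain ⟨F, hcard, hF⟩ := hfs y
      rw [tsum_eq_sum (f := fun γ : Γ => (‖κ ((γ : G) * y)‖₊ : ℝ≥0∞)) (s := F)
        (fun γ hγ => by simp only [hF γ hγ, nnnorm_zero, ENNReal.coe_zero])]
      rw [indicator_of_mem hy, mul_one]
      have hterm : ∀ γ ∈ F, (‖κ ((γ : G) * y)‖₊ : ℝ≥0∞) ≤ ENNReal.ofReal M := by
        intro γ _
        rw [← enorm_eq_nnnorm, ← ofReal_norm]
        exact ENNReal.ofReal_le_ofReal (hM _)
      calc ∑ γ ∈ F, (‖κ ((γ : G) * y)‖₊ : ℝ≥0∞) ≤ F.card • ENNReal.ofReal M :=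
            Finset.sum_le_card_nsmul _ _ _ hterm
        _ = (F.card : ℝ≥0∞) * ENNReal.ofReal M := by rw [nsmul_eq_mul]
        _ ≤ (N₀ : ℝ≥0∞) * ENNReal.ofReal M := by
            exact mul_le_mul_left (by exact_mod_cast hcard) _
        _ = ENNReal.ofReal (N₀ * M) := by
            rw [ENNReal.ofReal_mul (by positivity), ENNReal.ofReal_natCast]
    · rw [indicator_of_notMem hy, mul_zero]
      rw [show (fun γ : Γ => (‖κ ((γ : G) * y)‖₊ : ℝ≥0∞)) = fun _ => 0 from
        funext fun γ => by rw [hκE y hy γ]; simp]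
      simp
  have hbound' : ∀ y : G, (∑' γ : Γ, (‖κ ((γ : G) * y)‖₊ : ℝ≥0∞)) ≤
      ENNReal.ofReal (N₀ * M) := by
    intro y
    refine (hbound y).trans ?_
    by_cases hy : y ∈ E
    · rw [indicator_of_mem hy, mul_one]
    · rw [indicator_of_notMem hy, mul_zero]; exact zero_le
  -- measurability helpers
  have hκγmeas : ∀ γ : Γ, Measurable fun y => κ ((γ : G) * y) :=
    fun γ => hκc.measurable.comp (measurable_const_mul _)
  have hκγnn : ∀ γ : Γ, AEMeasurable (fun y => (‖κ ((γ : G) * y)‖₊ : ℝ≥0∞)) (μ.restrict D) :=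
    fun γ => ((hκγmeas γ).nnnorm.coe_nnreal_ennreal).aemeasurable
  -- the main unfolding identity
  have main_unfold : ∀ (F : G → ℂ), Measurable F → (∀ (γ : Γ) (y : G), F ((γ : G) * y) = F y) →
      (∫⁻ y in D, (∑' γ : Γ, (‖κ ((γ : G) * y)‖₊ : ℝ≥0∞)) * ‖F y‖₊ ∂μ) ≠ ⊤ →
      Integrable (fun y => κ y * F y) μ ∧
        (∫ y, κ y * F y ∂μ) = ∫ y in D, H y * F y ∂μ := by
    intro F hFm hFinv hfin'
    have hswap : (∑' γ : Γ, ∫⁻ y in D, (‖κ ((γ : G) * y)‖₊ : ℝ≥0∞) * ‖F y‖₊ ∂μ)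
        = ∫⁻ y in D, (∑' γ : Γ, (‖κ ((γ : G) * y)‖₊ : ℝ≥0∞)) * ‖F y‖₊ ∂μ := by
      rw [← lintegral_tsum (f := fun (γ : Γ) y => (‖κ ((γ : G) * y)‖₊ : ℝ≥0∞) * ‖F y‖₊) (fun γ => ((hκγnn γ).mul
        (hFm.nnnorm.coe_nnreal_ennreal.aemeasurable)))]
      refine lintegral_congr fun y => ?_
      rw [ENNReal.tsum_mul_right]
    have hlin : ∫⁻ y, (‖κ y * F y‖₊ : ℝ≥0∞) ∂μ
        = ∫⁻ y in D, (∑' γ : Γ, (‖κ ((γ : G) * y)‖₊ : ℝ≥0∞)) * ‖F y‖₊ ∂μ := by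
      rw [hD.lintegral_eq_tsum'' (fun y => (‖κ y * F y‖₊ : ℝ≥0∞))]
      rw [← hswap]
      refine tsum_congr fun γ => lintegral_congr fun y => ?_
      simp only [Subgroup.smul_def, smul_eq_mul, hFinv γ y, nnnorm_mul, ENNReal.coe_mul]
    have hInt : Integrable (fun y => κ y * F y) μ := by
      refine ⟨(hκc.measurable.mul hFm).aestronglyMeasurable, ?_⟩
      rw [hasFiniteIntegral_def]; simp only [enorm_eq_nnnorm]; rw [hlin]
      exact lt_of_le_of_ne le_top hfin'
    refine ⟨hInt, ?_⟩
    have hDswap : (∑' γ : Γ, ∫⁻ y in D, (‖κ ((γ : G) * y) * F y‖₊ : ℝ≥0∞) ∂μ) ≠ ⊤ := by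
      have : (∑' γ : Γ, ∫⁻ y in D, (‖κ ((γ : G) * y) * F y‖₊ : ℝ≥0∞) ∂μ)
          = ∑' γ : Γ, ∫⁻ y in D, (‖κ ((γ : G) * y)‖₊ : ℝ≥0∞) * ‖F y‖₊ ∂μ := by
        refine tsum_congr fun γ => lintegral_congr fun y => by
          rw [nnnorm_mul, ENNReal.coe_mul]
      rw [this, hswap]
      exact hfin'
    calc ∫ y, κ y * F y ∂μ
        = ∑' γ : Γ, ∫ y in D, κ ((γ : Γ) • y) * F ((γ : Γ) • y) ∂μ :=
          hD.integral_eq_tsum'' _ hInt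
      _ = ∑' γ : Γ, ∫ y in D, κ ((γ : G) * y) * F y ∂μ := by
          refine tsum_congr fun γ => ?_
          refine integral_congr_ae (Eventually.of_forall fun y => ?_)
          simp only [Subgroup.smul_def, smul_eq_mul, hFinv γ y]
      _ = ∫ y in D, ∑' γ : Γ, κ ((γ : G) * y) * F y ∂μ := by
          refine (integral_tsum (fun γ => ((hκγmeas γ).mul hFm).aestronglyMeasurable) ?_).symm
          exact hDswap
      _ = ∫ y in D, H y * F y ∂μ := by
          refine integral_congr_ae (Eventually.of_forall fun y => ?_)
          simp only [hHdef]
          exact tsum_mul_right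
  -- square trick in ℝ≥0∞
  have sq_trick : ∀ a : ℝ≥0∞, a ≤ a * a + 1 := by
    intro a
    rcases le_total a 1 with h | h
    · exact h.trans le_add_self
    · calc a = a * 1 := (mul_one a).symm
        _ ≤ a * a := mul_le_mul_right h a
        _ ≤ a * a + 1 := le_self_add
  -- the L² bound for f i
  have hf2 : ∀ i, (∫⁻ y in D, (‖f i y‖₊ : ℝ≥0∞) * ‖f i y‖₊ ∂μ) < ⊤ := by
    intro i
    have h1 : Integrable (fun x => ‖f i x‖ ^ 2) (μ.restrict D) :=
      (memLp_two_iff_integrable_sq_norm (hL2 i).1).mp (hL2 i)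
    have h2 := h1.lintegral_lt_top
    refine lt_of_eq_of_lt ?_ h2
    refine lintegral_congr fun y => ?_
    rw [ENNReal.ofReal_pow (norm_nonneg _), ofReal_norm, enorm_eq_nnnorm, sq]
  have hcond_i : ∀ i, (∫⁻ y in D, (∑' γ : Γ, (‖κ ((γ : G) * y)‖₊ : ℝ≥0∞)) * ‖f i y‖₊ ∂μ) ≠ ⊤ := by
    intro i
    have hb2 : ∀ y : G, (∑' γ : Γ, (‖κ ((γ : G) * y)‖₊ : ℝ≥0∞)) * ‖f i y‖₊ ≤
        ENNReal.ofReal (N₀ * M) *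
          ((‖f i y‖₊ : ℝ≥0∞) * ‖f i y‖₊ + E.indicator (fun _ => (1 : ℝ≥0∞)) y) := by
      intro y
      calc (∑' γ : Γ, (‖κ ((γ : G) * y)‖₊ : ℝ≥0∞)) * ‖f i y‖₊
          ≤ (ENNReal.ofReal (N₀ * M) * E.indicator (fun _ => (1 : ℝ≥0∞)) y) * ‖f i y‖₊ :=
            mul_le_mul_left (hbound y) _
        _ = ENNReal.ofReal (N₀ * M) * (E.indicator (fun _ => (1 : ℝ≥0∞)) y * ‖f i y‖₊) :=
            mul_assoc _ _ _
        _ ≤ ENNReal.ofReal (N₀ * M) *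
            ((‖f i y‖₊ : ℝ≥0∞) * ‖f i y‖₊ + E.indicator (fun _ => (1 : ℝ≥0∞)) y) := by
            refine mul_le_mul_right ?_ _
            by_cases hy : y ∈ E
            · rw [indicator_of_mem hy, one_mul]
              exact sq_trick _
            · rw [indicator_of_notMem hy, zero_mul]
              exact zero_le
    have hle := lintegral_mono hb2 (μ := μ.restrict D)
    refine ne_top_of_le_ne_top ?_ hle
    rw [lintegral_const_mul' _ _ ENNReal.ofReal_ne_top]
    rw [lintegral_add_left (f := fun y => (‖f i y‖₊ : ℝ≥0∞) * ‖f i y‖₊) ((hmeas i).nnnorm.coe_nnreal_ennreal.mul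
      (hmeas i).nnnorm.coe_nnreal_ennreal)]
    have hIE : (∫⁻ y in D, E.indicator (fun _ => (1 : ℝ≥0∞)) y ∂μ) = μ (E ∩ D) := by
      rw [lintegral_indicator hEmeas, setLIntegral_one, Measure.restrict_apply hEmeas]
    refine ENNReal.mul_ne_top ENNReal.ofReal_ne_top ?_
    rw [hIE]
    refine ENNReal.add_ne_top.2 ⟨(hf2 i).ne, ?_⟩
    rw [inter_comm]
    exact hμDE.ne
  -- integrability of ‖κ‖ and the conj H condition
  have hκint : Integrable κ μ := hκc.integrable_of_hasCompactSupport hκsupp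
  have hκlin : (∫⁻ y, (‖κ y‖₊ : ℝ≥0∞) ∂μ) ≠ ⊤ := by
    have := hκint.2
    rw [hasFiniteIntegral_def] at this
    exact this.ne
  have hsumD : (∫⁻ y in D, (∑' γ : Γ, (‖κ ((γ : G) * y)‖₊ : ℝ≥0∞)) ∂μ) ≠ ⊤ := by
    have h1 : (∫⁻ y in D, (∑' γ : Γ, (‖κ ((γ : G) * y)‖₊ : ℝ≥0∞)) ∂μ)
        = ∑' γ : Γ, ∫⁻ y in D, (‖κ ((γ : G) * y)‖₊ : ℝ≥0∞) ∂μ := lintegral_tsum hκγnn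
    have h2 : (∫⁻ y, (‖κ y‖₊ : ℝ≥0∞) ∂μ)
        = ∑' γ : Γ, ∫⁻ y in D, (‖κ ((γ : G) * y)‖₊ : ℝ≥0∞) ∂μ := by
      rw [hD.lintegral_eq_tsum'' (fun y => (‖κ y‖₊ : ℝ≥0∞))]
      refine tsum_congr fun γ => lintegral_congr fun y => by
        simp only [Subgroup.smul_def, smul_eq_mul]
    rw [h1, ← h2]
    exact hκlin
  have hcond_H : (∫⁻ y in D,
      (∑' γ : Γ, (‖κ ((γ : G) * y)‖₊ : ℝ≥0∞)) * ‖(starRingEnd ℂ) (H y)‖₊ ∂μ) ≠ ⊤ := by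
    have hb : ∀ y : G, (∑' γ : Γ, (‖κ ((γ : G) * y)‖₊ : ℝ≥0∞)) * ‖(starRingEnd ℂ) (H y)‖₊ ≤
        (∑' γ : Γ, (‖κ ((γ : G) * y)‖₊ : ℝ≥0∞)) * ENNReal.ofReal (N₀ * M) := by
      intro y
      refine mul_le_mul_right ?_ _
      rw [← enorm_eq_nnnorm, ← ofReal_norm, RCLike.norm_conj]
      exact ENNReal.ofReal_le_ofReal (hHnorm y)
    refine ne_top_of_le_ne_top ?_ (lintegral_mono hb)
    rw [lintegral_mul_const' _ _ ENNReal.ofReal_ne_top]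
    exact ENNReal.mul_ne_top hsumD ENNReal.ofReal_ne_top
  -- apply the unfolding
  have hint_f : ∀ i, Integrable (fun y => κ y * f i y) μ ∧
      (∫ y, κ y * f i y ∂μ) = ∫ y in D, H y * f i y ∂μ :=
    fun i => main_unfold (f i) (hmeas i) (hinv i) (hcond_i i)
  have hint_H := main_unfold (fun y => (starRingEnd ℂ) (H y))
    ((continuous_star.comp hHcont).measurable)
    (fun γ y => by simp only [hHinv]) hcond_H
  -- the rewriting of the right-hand side
  have hterm : ∀ δ : Γ, (∫ y, κ y * (starRingEnd ℂ) (κ ((δ : G) * y)) ∂μ)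
      = ∫ x, k x * (starRingEnd ℂ) (k ((g⁻¹ * ((δ : G))⁻¹ * g)⁻¹ * x)) ∂μ := by
    intro δ
    rw [← MeasureTheory.integral_mul_left_eq_self
      (fun y => κ y * (starRingEnd ℂ) (κ ((δ : G) * y))) g]
    refine integral_congr_ae (Eventually.of_forall fun x => ?_)
    simp only [hκdef]
    rw [inv_mul_cancel_left]
    congr 2
    group
  have hSalt : (∑' γ : Γ, ∫ x, k x * (starRingEnd ℂ) (k ((g⁻¹ * (γ : G) * g)⁻¹ * x)) ∂μ)
      = ∑' δ : Γ, ∫ y, κ y * (starRingEnd ℂ) (κ ((δ : G) * y)) ∂μ := by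
    rw [← (Equiv.inv Γ).tsum_eq
      (fun γ : Γ => ∫ x, k x * (starRingEnd ℂ) (k ((g⁻¹ * (γ : G) * g)⁻¹ * x)) ∂μ)]
    refine tsum_congr fun δ => ?_
    rw [hterm δ]
    simp
  -- the convolution sum computation
  have hHport : (∫ y, κ y * (starRingEnd ℂ) (H y) ∂μ)
      = ∑' δ : Γ, ∫ y, κ y * (starRingEnd ℂ) (κ ((δ : G) * y)) ∂μ := by
    have h1 : ∀ y : G, κ y * (starRingEnd ℂ) (H y)
        = ∑' δ : Γ, κ y * (starRingEnd ℂ) (κ ((δ : G) * y)) := by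
      intro y
      simp only [hHdef, starRingEnd_apply]
      rw [tsum_star, ← tsum_mul_left]
    have hlt : (∑' δ : Γ, ∫⁻ y, (‖κ y * (starRingEnd ℂ) (κ ((δ : G) * y))‖₊ : ℝ≥0∞) ∂μ) ≠ ⊤ := by
      have heq : (∑' δ : Γ, ∫⁻ y, (‖κ y * (starRingEnd ℂ) (κ ((δ : G) * y))‖₊ : ℝ≥0∞) ∂μ)
          = ∫⁻ y, (‖κ y‖₊ : ℝ≥0∞) * ∑' δ : Γ, (‖κ ((δ : G) * y)‖₊ : ℝ≥0∞) ∂μ := by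
        have hm : ∀ δ : Γ, AEMeasurable
            (fun y => (‖κ y * (starRingEnd ℂ) (κ ((δ : G) * y))‖₊ : ℝ≥0∞)) μ := by
          intro δ
          exact ((hκc.mul (continuous_star.comp (hκc.comp
            (continuous_const.mul continuous_id)))).measurable.nnnorm.coe_nnreal_ennreal).aemeasurable
        rw [← lintegral_tsum hm]
        refine lintegral_congr fun y => ?_
        rw [← ENNReal.tsum_mul_left]
        refine tsum_congr fun δ => ?_
        rw [nnnorm_mul, ENNReal.coe_mul]
        congr 1
        rw [← enorm_eq_nnnorm, ← enorm_eq_nnnorm, ← ofReal_norm, ← ofReal_norm, RCLike.norm_conj]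
      rw [heq]
      have hb : ∀ y : G, (‖κ y‖₊ : ℝ≥0∞) * ∑' δ : Γ, (‖κ ((δ : G) * y)‖₊ : ℝ≥0∞)
          ≤ (‖κ y‖₊ : ℝ≥0∞) * ENNReal.ofReal (N₀ * M) :=
        fun y => mul_le_mul_right (hbound' y) _
      refine ne_top_of_le_ne_top ?_ (lintegral_mono hb)
      rw [lintegral_mul_const' _ _ ENNReal.ofReal_ne_top]
      exact ENNReal.mul_ne_top hκlin ENNReal.ofReal_ne_top
    calc ∫ y, κ y * (starRingEnd ℂ) (H y) ∂μ
        = ∫ y, ∑' δ : Γ, κ y * (starRingEnd ℂ) (κ ((δ : G) * y)) ∂μ :=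
          integral_congr_ae (Eventually.of_forall h1)
      _ = ∑' δ : Γ, ∫ y, κ y * (starRingEnd ℂ) (κ ((δ : G) * y)) ∂μ := by
          refine integral_tsum (fun δ => ?_) hlt
          exact (hκc.mul (continuous_star.comp
            (hκc.comp (continuous_const.mul continuous_id)))).aestronglyMeasurable
  have hRHS : (∫ y in D, H y * (starRingEnd ℂ) (H y) ∂μ)
      = ∑' γ : Γ, ∫ x, k x * (starRingEnd ℂ) (k ((g⁻¹ * (γ : G) * g)⁻¹ * x)) ∂μ := by
    rw [← hint_H.2, hHport, hSalt]
  -- the Hilbert space part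
  have hφmem : MemLp (fun y => (starRingEnd ℂ) (H y)) 2 (μ.restrict D) := by
    refine MemLp.of_le (memLp_indicator_const 2 hEmeas (N₀ * M : ℝ) (Or.inr ?_))
      ((continuous_star.comp hHcont).aestronglyMeasurable) (Eventually.of_forall fun y => ?_)
    · rw [Measure.restrict_apply hEmeas, inter_comm]
      exact hμDE.ne
    · by_cases hy : y ∈ E
      · rw [indicator_of_mem hy, Real.norm_of_nonneg (by positivity)]
        rw [RCLike.norm_conj]
        exact hHnorm y
      · rw [indicator_of_notMem hy]
        simp [hH0 y hy]
  set φL : Lp ℂ 2 (μ.restrict D) := hφmem.toLp _ with hφLdef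
  set e : ι → Lp ℂ 2 (μ.restrict D) := fun i => (hL2 i).toLp _ with hedef
  have he_on : Orthonormal ℂ e := by
    rw [orthonormal_iff_ite]
    intro i j
    rw [L2.inner_def]
    simp only [RCLike.inner_apply']
    have hae : ∀ᵐ y ∂(μ.restrict D),
        (starRingEnd ℂ) ((e i : G → ℂ) y) * (e j : G → ℂ) y
          = (starRingEnd ℂ) (f i y) * f j y := by
      filter_upwards [(hL2 i).coeFn_toLp, (hL2 j).coeFn_toLp] with y h1 h2
      simp only [hedef]
      rw [h1, h2]
    rw [integral_congr_ae hae]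
    have : (∫ y in D, (starRingEnd ℂ) (f i y) * f j y ∂μ)
        = (starRingEnd ℂ) (∫ y in D, f i y * (starRingEnd ℂ) (f j y) ∂μ) := by
      rw [← integral_conj]
      refine integral_congr_ae (Eventually.of_forall fun y => ?_)
      simp [mul_comm]
    rw [this, horth i j]
    split <;> simp
  have hinner_e : ∀ i, (inner ℂ φL (e i) : ℂ) = ∫ y in D, H y * f i y ∂μ := by
    intro i
    rw [L2.inner_def]
    simp only [RCLike.inner_apply']
    refine integral_congr_ae ?_
    filter_upwards [hφmem.coeFn_toLp, (hL2 i).coeFn_toLp] with y h1 h2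
    simp only [hφLdef, hedef]
    rw [h1, h2, starRingEnd_self_apply]
  have hself : (inner ℂ φL φL : ℂ) = ∫ y in D, H y * (starRingEnd ℂ) (H y) ∂μ := by
    rw [L2.inner_def]
    simp only [RCLike.inner_apply']
    refine integral_congr_ae ?_
    filter_upwards [hφmem.coeFn_toLp] with y h1
    simp only [hφLdef]
    rw [h1, starRingEnd_self_apply]
  have hnorm_sq : ‖φL‖ ^ 2
      = (∑' γ : Γ, ∫ x, k x * (starRingEnd ℂ) (k ((g⁻¹ * (γ : G) * g)⁻¹ * x)) ∂μ).re := by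
    rw [← inner_self_eq_norm_sq (𝕜 := ℂ) φL, hself, hRHS, RCLike.re_to_complex]
  have hlhs : ∀ i, (∫ x, k x * f i (g * x) ∂μ) = (inner ℂ φL (e i) : ℂ) := by
    intro i
    rw [hinner_e i, ← (hint_f i).2]
    rw [← MeasureTheory.integral_mul_left_eq_self (fun y => κ y * f i y) g]
    refine integral_congr_ae (Eventually.of_forall fun x => ?_)
    simp only [hκdef]
    rw [inv_mul_cancel_left]
  constructor
  · -- finiteness
    set Q' : Set G := tsupport k with hQ'def
    have hC : IsCompact ((fun h => g * h * g⁻¹) '' (Q' * Q'⁻¹)) := by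
      refine IsCompact.image (hksupp.mul hksupp.inv) ?_
      exact (continuous_const.mul continuous_id).mul continuous_const
    refine ((hfin _ hC).subset ?_)
    intro γ hγ
    have hex : ∃ x, k x * (starRingEnd ℂ) (k ((g⁻¹ * (γ : G) * g)⁻¹ * x)) ≠ 0 := by
      by_contra h
      push_neg at h
      refine hγ ?_
      simp only [h]
      exact integral_zero _ _
    obtain ⟨x, hx⟩ := hex
    have hx1 : k x ≠ 0 := fun h => hx (by rw [h, zero_mul])
    have hx2 : k ((g⁻¹ * (γ : G) * g)⁻¹ * x) ≠ 0 := fun h => hx (by rw [h, map_zero, mul_zero])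
    have hm1 : x ∈ Q' := subset_tsupport k hx1
    have hm2 : (g⁻¹ * (γ : G) * g)⁻¹ * x ∈ Q' := subset_tsupport k hx2
    refine ⟨g⁻¹ * (γ : G) * g, ?_, by group⟩
    exact ⟨x, hm1, ((g⁻¹ * (γ : G) * g)⁻¹ * x)⁻¹, by simpa using hm2, by group⟩
  · have bessel := he_on.tsum_inner_products_le φL
    calc (∑' i, ‖∫ x, k x * f i (g * x) ∂μ‖ ^ 2)
        = ∑' i, ‖(inner ℂ (e i) φL : ℂ)‖ ^ 2 := by
          refine tsum_congr fun i => ?_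
          rw [hlhs i, ← inner_conj_symm, RCLike.norm_conj]
      _ ≤ ‖φL‖ ^ 2 := bessel
      _ = _ := hnorm_sq
end

section
/- Let G be a locally compact, second-countable Hausdorff topological group with left Haar measure μ, let Γ be a discrete (hence countable) subgroup of G, let D ⊆ G be a measurable fundamental domain for the action of Γ on G by left multiplication, and let k : G → ℂ be continuous with compact support. Then for every g ∈ G the function x ↦ ∑_{γ∈Γ} k(g⁻¹ γ x) (for each x a sum with only finitely many nonzero terms) is square-integrable on D, and ∫_D | ∑_{γ∈Γ} k(g⁻¹ γ x) |² dμ(x) = ∑_{γ∈Γ} (k ⋆ k^∨)(g⁻¹ γ g), the right-hand sum having only finitely many nonzero terms. -/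
open MeasureTheory

section Aux

open Filter Set

variable {G : Type*} [Group G] [TopologicalSpace G] [IsTopologicalGroup G]
    [SecondCountableTopology G] [T2Space G]

/-- A discrete subgroup meets every compact set in a finite set. -/
lemma aux_discrete_compact_finite (Γ : Subgroup G) [DiscreteTopology Γ]
    {C : Set G} (hC : IsCompact C) : {γ : Γ | (γ : G) ∈ C}.Finite := by
  have h := Subgroup.tendsto_coe_cofinite_of_discrete (G := G) Γ (isDiscrete_iff_discreteTopology.mpr inferInstance)
  have h2 : (Subtype.val : Γ → G) ⁻¹' Cᶜ ∈ Filter.cofinite := h (hC.compl_mem_cocompact)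
  rw [Filter.mem_cofinite, Set.preimage_compl, compl_compl] at h2
  exact h2

lemma aux_countable (Γ : Subgroup G) [DiscreteTopology Γ] : Countable Γ :=
  TopologicalSpace.separableSpace_iff_countable.mp inferInstance

end Aux

/-- **L²-norm of the automorphic kernel (from the proof of Lemma 7.2.1).** Let `G` be a
locally compact second-countable Hausdorff topological group with left Haar measure `μ`,
`Γ ≤ G` a discrete subgroup, `D` a measurable fundamental domain for the left action of `Γ`
on `G`, and `k` continuous with compact support. Then for every `g ∈ G` the automorphic
kernel `x ↦ ∑_{γ ∈ Γ} k(g⁻¹ γ x)` (a finite sum at each point) is square-integrable on `D`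
and `∫_D |∑_{γ ∈ Γ} k(g⁻¹ γ x)|² dμ(x) = ∑_{γ ∈ Γ} (k ⋆ k^∨)(g⁻¹ γ g)`, the right-hand sum
having only finitely many nonzero terms. -/
theorem automorphic_kernel_L2_norm
    (G : Type*) [Group G] [TopologicalSpace G] [IsTopologicalGroup G]
    [LocallyCompactSpace G] [SecondCountableTopology G] [T2Space G]
    [MeasurableSpace G] [BorelSpace G]
    (μ : Measure G) [μ.IsHaarMeasure]
    (Γ : Subgroup G) [DiscreteTopology Γ]
    (D : Set G) (hD : IsFundamentalDomain Γ D μ)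
    (k : G → ℂ) (hk : Continuous k) (hksupp : HasCompactSupport k) (g : G) :
    (∀ x : G, {γ : Γ | k (g⁻¹ * (γ : G) * x) ≠ 0}.Finite) ∧
      MemLp (fun x => ∑' γ : Γ, k (g⁻¹ * (γ : G) * x)) 2 (μ.restrict D) ∧
      {γ : Γ | (∫ x, k x * (starRingEnd ℂ) (k ((g⁻¹ * (γ : G) * g)⁻¹ * x)) ∂μ) ≠ 0}.Finite ∧
      ((∫ x in D, ‖∑' γ : Γ, k (g⁻¹ * (γ : G) * x)‖ ^ 2 ∂μ : ℝ) : ℂ) =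
        ∑' γ : Γ, ∫ x, k x * (starRingEnd ℂ) (k ((g⁻¹ * (γ : G) * g)⁻¹ * x)) ∂μ := by
  classical
  haveI : Countable Γ := aux_countable Γ
  -- continuity of the translates
  have hΦc : ∀ γ : Γ, Continuous fun x => k (g⁻¹ * (γ : G) * x) :=
    fun γ => hk.comp (continuous_mul_left _)
  -- finiteness of γ's hitting a compact set, uniformly over a compact set of x's
  have hBig : ∀ U : Set G, IsCompact U →
      {γ : Γ | ∃ x ∈ U, k (g⁻¹ * (γ : G) * x) ≠ 0}.Finite := by
    intro U hU
    have hC : IsCompact ((fun p : G × G => g * p.1 * p.2⁻¹) '' (tsupport k ×ˢ U)) :=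
      (hksupp.prod hU).image
        ((continuous_const.mul continuous_fst).mul continuous_snd.inv)
    refine (aux_discrete_compact_finite Γ hC).subset ?_
    rintro γ ⟨x, hxU, hx⟩
    refine ⟨(g⁻¹ * (γ : G) * x, x), ⟨subset_tsupport k hx, hxU⟩, ?_⟩
    simp only; group
  -- pointwise finiteness
  have h1 : ∀ x : G, {γ : Γ | k (g⁻¹ * (γ : G) * x) ≠ 0}.Finite := by
    intro x
    refine (hBig {x} isCompact_singleton).subset ?_
    · intro γ hγ; exact ⟨x, rfl, hγ⟩
  -- the kernel K and the dominating function F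
  set K : G → ℂ := fun x => ∑' γ : Γ, k (g⁻¹ * (γ : G) * x) with hKdef
  set F : G → ENNReal := fun x => ∑' γ : Γ, (‖k (g⁻¹ * (γ : G) * x)‖₊ : ENNReal) with hFdef
  -- Γ-invariance of K and F
  have hassoc : ∀ (δ : Γ) (γ : Γ) (x : G),
      g⁻¹ * ((γ : G) * (δ : G)) * x = g⁻¹ * (γ : G) * ((δ : G) * x) := by
    intro δ γ x; group
  have hKinv : ∀ (δ : Γ) (x : G), K ((δ : G) * x) = K x := by
    intro δ x
    have e1 : K ((δ : G) * x) = ∑' γ : Γ, k (g⁻¹ * ((γ * δ : Γ) : G) * x) :=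
      tsum_congr fun γ => by rw [Subgroup.coe_mul, hassoc]
    exact e1.trans ((Equiv.mulRight δ).tsum_eq (fun γ : Γ => k (g⁻¹ * (γ : G) * x)))
  have hFinv : ∀ (δ : Γ) (x : G), F ((δ : G) * x) = F x := by
    intro δ x
    have e1 : F ((δ : G) * x)
        = ∑' γ : Γ, (‖k (g⁻¹ * ((γ * δ : Γ) : G) * x)‖₊ : ENNReal) :=
      tsum_congr fun γ => by rw [Subgroup.coe_mul, hassoc]
    exact e1.trans ((Equiv.mulRight δ).tsum_eq
      (fun γ : Γ => (‖k (g⁻¹ * (γ : G) * x)‖₊ : ENNReal)))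
  -- continuity of K
  have hKcont : Continuous K := by
    rw [continuous_iff_continuousAt]
    intro x₀
    obtain ⟨U, hUc, hU⟩ := exists_compact_mem_nhds x₀
    have hS := hBig U hUc
    have heq : ∀ x ∈ U, K x = ∑ γ ∈ hS.toFinset, k (g⁻¹ * (γ : G) * x) := by
      intro x hx
      refine tsum_eq_sum fun γ hγ => ?_
      by_contra hne
      exact hγ (hS.mem_toFinset.mpr ⟨x, hx, hne⟩)
    have hcont : ContinuousAt (fun x => ∑ γ ∈ hS.toFinset, k (g⁻¹ * (γ : G) * x)) x₀ :=
      (continuous_finset_sum _ fun γ _ => hΦc γ).continuousAt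
    exact hcont.congr (Filter.eventuallyEq_of_mem hU fun x hx => (heq x hx).symm)
  -- measurability of F
  have hFmeas : Measurable F := by
    rw [hFdef]
    exact Measurable.ennreal_tsum fun γ => (hΦc γ).measurable.enorm
  -- bound for k
  obtain ⟨Ck, hCk⟩ : ∃ C : ℝ, ∀ x, ‖k x‖ ≤ C := hk.bounded_above_of_compact_support hksupp
  have hCk' : ∀ x, (‖k x‖₊ : ENNReal) ≤ ENNReal.ofReal Ck := by
    intro x
    rw [← ENNReal.ofReal_coe_nnreal, coe_nnnorm]
    exact ENNReal.ofReal_le_ofReal (hCk x)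
  -- F is bounded on compact sets
  have hFbd : ∀ U : Set G, IsCompact U → ∃ M : ENNReal, M ≠ ⊤ ∧ ∀ x ∈ U, F x ≤ M := by
    intro U hU
    have hS := hBig U hU
    refine ⟨hS.toFinset.card * ENNReal.ofReal Ck, by finiteness, fun x hx => ?_⟩
    have hFx : F x = ∑ γ ∈ hS.toFinset, (‖k (g⁻¹ * (γ : G) * x)‖₊ : ENNReal) := by
      rw [hFdef]
      refine tsum_eq_sum fun γ hγ => ?_
      by_contra hne
      have : k (g⁻¹ * (γ : G) * x) = 0 := by
        by_contra hne2
        exact hγ (hS.mem_toFinset.mpr ⟨x, hx, hne2⟩)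
      simp [this] at hne
    rw [hFx]
    calc ∑ γ ∈ hS.toFinset, (‖k (g⁻¹ * (γ : G) * x)‖₊ : ENNReal)
        ≤ ∑ _γ ∈ hS.toFinset, ENNReal.ofReal Ck := Finset.sum_le_sum fun γ _ => hCk' _
      _ = hS.toFinset.card * ENNReal.ofReal Ck := by rw [Finset.sum_const, nsmul_eq_mul]
  -- smul on G by Γ is left multiplication
  have hsmul : ∀ (γ : Γ) (x : G), γ • x = (γ : G) * x := fun γ x => rfl
  -- the key unfolding identity at the level of lintegrals
  have hG_key : ∑' γ : Γ, ∫⁻ x in D, (‖k (g⁻¹ * (γ : G) * x)‖₊ : ENNReal) * F x ∂μ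
      = ∫⁻ x, (‖k (g⁻¹ * x)‖₊ : ENNReal) * F x ∂μ := by
    rw [hD.lintegral_eq_tsum'' (fun x => (‖k (g⁻¹ * x)‖₊ : ENNReal) * F x)]
    refine tsum_congr fun γ => lintegral_congr fun x => ?_
    rw [hsmul, hFinv, ← mul_assoc]
  have hC₀ : IsCompact ((g * ·) '' tsupport k) := hksupp.image (continuous_mul_left g)
  obtain ⟨M₀, hM₀top, hM₀⟩ := hFbd _ hC₀
  have hG_fin : ∫⁻ x, (‖k (g⁻¹ * x)‖₊ : ENNReal) * F x ∂μ < ⊤ := by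
    have hle : ∀ x, (‖k (g⁻¹ * x)‖₊ : ENNReal) * F x
        ≤ ((g * ·) '' tsupport k).indicator (fun _ => ENNReal.ofReal Ck * M₀) x := by
      intro x
      by_cases hx : x ∈ (g * ·) '' tsupport k
      · rw [Set.indicator_of_mem hx]
        exact mul_le_mul' (hCk' _) (hM₀ x hx)
      · rw [Set.indicator_of_notMem hx]
        have h0 : k (g⁻¹ * x) = 0 := by
          apply image_eq_zero_of_notMem_tsupport
          intro hmem
          exact hx ⟨g⁻¹ * x, hmem, by group⟩
        simp [h0]
    calc ∫⁻ x, (‖k (g⁻¹ * x)‖₊ : ENNReal) * F x ∂μ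
        ≤ ∫⁻ x, ((g * ·) '' tsupport k).indicator (fun _ => ENNReal.ofReal Ck * M₀) x ∂μ :=
          lintegral_mono hle
      _ = ENNReal.ofReal Ck * M₀ * μ ((g * ·) '' tsupport k) :=
          lintegral_indicator_const hC₀.isClosed.measurableSet _
      _ < ⊤ := ENNReal.mul_lt_top
          (ENNReal.mul_lt_top ENNReal.ofReal_lt_top hM₀top.lt_top) hC₀.measure_lt_top
  -- square of F is integrable on D
  have hDF2 : ∫⁻ x in D, F x * F x ∂μ < ⊤ := by
    have e1 : ∀ x : G, F x * F x
        = ∑' γ : Γ, (‖k (g⁻¹ * (γ : G) * x)‖₊ : ENNReal) * F x := by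
      intro x
      conv_lhs => rw [hFdef]
      exact ENNReal.tsum_mul_right.symm
    calc ∫⁻ x in D, F x * F x ∂μ
        = ∫⁻ x in D, ∑' γ : Γ, (‖k (g⁻¹ * (γ : G) * x)‖₊ : ENNReal) * F x ∂μ :=
          lintegral_congr e1
      _ = ∑' γ : Γ, ∫⁻ x in D, (‖k (g⁻¹ * (γ : G) * x)‖₊ : ENNReal) * F x ∂μ :=
          lintegral_tsum fun γ => ((hΦc γ).measurable.enorm.mul hFmeas).aemeasurable
      _ = ∫⁻ x, (‖k (g⁻¹ * x)‖₊ : ENNReal) * F x ∂μ := hG_key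
      _ < ⊤ := hG_fin
  -- pointwise domination of K by F
  have hKF : ∀ x : G, (‖K x‖₊ : ENNReal) ≤ F x := by
    intro x
    have hs := h1 x
    have hzero : ∀ γ : Γ, γ ∉ hs.toFinset → k (g⁻¹ * (γ : G) * x) = 0 := by
      intro γ hγ
      by_contra hne
      exact hγ (hs.mem_toFinset.mpr hne)
    have hKx : K x = ∑ γ ∈ hs.toFinset, k (g⁻¹ * (γ : G) * x) := tsum_eq_sum hzero
    have hFx : F x = ∑ γ ∈ hs.toFinset, (‖k (g⁻¹ * (γ : G) * x)‖₊ : ENNReal) :=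
      tsum_eq_sum fun γ hγ => by simp [hzero γ hγ]
    rw [hKx, hFx, ← ENNReal.coe_finset_sum, ENNReal.coe_le_coe]
    exact nnnorm_sum_le _ _
  -- square-integrability of K on D
  have hKsq_int : Integrable (fun x => ‖K x‖ ^ 2) (μ.restrict D) := by
    refine ⟨(hKcont.norm.pow 2).aestronglyMeasurable, ?_⟩
    rw [hasFiniteIntegral_def]
    refine lt_of_le_of_lt (lintegral_mono fun x => ?_) hDF2
    have e2 : (‖(‖K x‖ ^ 2 : ℝ)‖₊ : ENNReal) = (‖K x‖₊ : ENNReal) * (‖K x‖₊ : ENNReal) := by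
      rw [nnnorm_pow, nnnorm_norm, sq, ENNReal.coe_mul]
    rw [show ‖(‖K x‖ ^ 2 : ℝ)‖ₑ = _ from e2]
    exact mul_le_mul' (hKF x) (hKF x)
  have hMem : MemLp K 2 (μ.restrict D) :=
    (memLp_two_iff_integrable_sq_norm hKcont.aestronglyMeasurable).mpr hKsq_int
  -- the compact set controlling the convolution terms
  have hC₂ : IsCompact ((fun p : G × G => g * p.1 * p.2⁻¹ * g⁻¹) '' (tsupport k ×ˢ tsupport k)) :=
    (hksupp.prod hksupp).image
      (((continuous_const.mul continuous_fst).mul continuous_snd.inv).mul continuous_const)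
  have hS₂ := aux_discrete_compact_finite Γ hC₂
  have hzero₂ : ∀ γ : Γ,
      (γ : G) ∉ (fun p : G × G => g * p.1 * p.2⁻¹ * g⁻¹) '' (tsupport k ×ˢ tsupport k) →
      ∀ y, k y * (starRingEnd ℂ) (k (g⁻¹ * (γ : G) * g * y)) = 0 := by
    intro γ hγ y
    by_contra hne
    have hy : k y ≠ 0 := fun h => hne (by simp [h])
    have hz : k (g⁻¹ * (γ : G) * g * y) ≠ 0 := fun h => hne (by simp [h])
    refine hγ ⟨(g⁻¹ * (γ : G) * g * y, y), ⟨subset_tsupport k hz, subset_tsupport k hy⟩, ?_⟩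
    simp only; group
  -- finiteness of the set of nonvanishing convolution terms
  have hJfin : {γ : Γ |
      (∫ x, k x * (starRingEnd ℂ) (k ((g⁻¹ * (γ : G) * g)⁻¹ * x)) ∂μ) ≠ 0}.Finite := by
    refine ((hS₂.preimage (f := fun γ : Γ => γ⁻¹) inv_injective.injOn)).subset ?_
    intro γ hγ
    simp only [Set.mem_preimage, Set.mem_setOf_eq]
    by_contra hmem
    apply hγ
    have h0 : ∀ x, k x * (starRingEnd ℂ) (k ((g⁻¹ * (γ : G) * g)⁻¹ * x)) = 0 := by
      intro x
      have h := hzero₂ γ⁻¹ hmem x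
      rwa [show g⁻¹ * ((γ⁻¹ : Γ) : G) * g * x = (g⁻¹ * (γ : G) * g)⁻¹ * x from by
        rw [Subgroup.coe_inv]; group] at h
    simp only [h0, integral_zero]
  -- the function H used in the unfolding trick
  have hconjK : Continuous fun x => (starRingEnd ℂ) (K x) := continuous_star.comp hKcont
  have hHc : Continuous fun x => k (g⁻¹ * x) * (starRingEnd ℂ) (K x) :=
    (hk.comp (continuous_mul_left g⁻¹)).mul hconjK
  have hHsupp : HasCompactSupport fun x => k (g⁻¹ * x) * (starRingEnd ℂ) (K x) :=
    HasCompactSupport.mul_right (hksupp.comp_homeomorph (Homeomorph.mulLeft g⁻¹))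
  have hHint : Integrable (fun x => k (g⁻¹ * x) * (starRingEnd ℂ) (K x)) μ :=
    hHc.integrable_of_hasCompactSupport hHsupp
  -- bound needed for interchanging sum and integral
  have hbound : ∑' γ : Γ,
      ∫⁻ x, ↑‖k (g⁻¹ * (γ : G) * x) * (starRingEnd ℂ) (K x)‖₊ ∂(μ.restrict D) ≠ ⊤ := by
    refine ne_top_of_le_ne_top (by rw [hG_key]; exact hG_fin.ne)
      (ENNReal.tsum_le_tsum fun γ => lintegral_mono fun x => ?_)
    rw [nnnorm_mul, ENNReal.coe_mul, starRingEnd_apply, nnnorm_star]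
    exact mul_le_mul' le_rfl (hKF x)
  -- integrability of the individual convolution integrands
  have hconv_int : ∀ γ : Γ,
      Integrable (fun y => k y * (starRingEnd ℂ) (k (g⁻¹ * (γ : G) * g * y))) μ := by
    intro γ
    refine Continuous.integrable_of_hasCompactSupport ?_ (HasCompactSupport.mul_right hksupp)
    exact hk.mul (continuous_star.comp (hk.comp (continuous_mul_left _)))
  -- the main computation
  have hmain : ((∫ x in D, ‖K x‖ ^ 2 ∂μ : ℝ) : ℂ)
      = ∑' γ : Γ, ∫ x, k x * (starRingEnd ℂ) (k ((g⁻¹ * (γ : G) * g)⁻¹ * x)) ∂μ := by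
    calc ((∫ x in D, ‖K x‖ ^ 2 ∂μ : ℝ) : ℂ)
        = ∫ x in D, ((‖K x‖ ^ 2 : ℝ) : ℂ) ∂μ := integral_ofReal.symm
      _ = ∫ x in D, K x * (starRingEnd ℂ) (K x) ∂μ := by
          refine integral_congr_ae (Filter.Eventually.of_forall fun x => ?_)
          beta_reduce
          rw [Complex.mul_conj, Complex.normSq_eq_norm_sq]
      _ = ∫ x in D, ∑' γ : Γ, k (g⁻¹ * (γ : G) * x) * (starRingEnd ℂ) (K x) ∂μ := by
          refine integral_congr_ae (Filter.Eventually.of_forall fun x => ?_)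
          exact tsum_mul_right.symm
      _ = ∑' γ : Γ, ∫ x in D, k (g⁻¹ * (γ : G) * x) * (starRingEnd ℂ) (K x) ∂μ :=
          integral_tsum (fun γ => ((hΦc γ).mul hconjK).aestronglyMeasurable) hbound
      _ = ∑' γ : Γ, ∫ x in D,
            (fun y => k (g⁻¹ * y) * (starRingEnd ℂ) (K y)) (γ • x) ∂μ := by
          refine tsum_congr fun γ => integral_congr_ae (Filter.Eventually.of_forall fun x => ?_)
          simp only [hsmul]
          rw [← mul_assoc, hKinv]
      _ = ∫ x, k (g⁻¹ * x) * (starRingEnd ℂ) (K x) ∂μ :=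
          (hD.integral_eq_tsum'' _ hHint).symm
      _ = ∫ y, k (g⁻¹ * (g * y)) * (starRingEnd ℂ) (K (g * y)) ∂μ :=
          (integral_mul_left_eq_self (fun x => k (g⁻¹ * x) * (starRingEnd ℂ) (K x)) g).symm
      _ = ∫ y, ∑' γ : Γ, k y * (starRingEnd ℂ) (k (g⁻¹ * (γ : G) * g * y)) ∂μ := by
          refine integral_congr_ae (Filter.Eventually.of_forall fun y => ?_)
          beta_reduce
          rw [inv_mul_cancel_left, hKdef]
          simp only [starRingEnd_apply, tsum_star]
          rw [← tsum_mul_left]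
          exact tsum_congr fun γ => by rw [mul_assoc (g⁻¹ * (γ : G)) g y]
      _ = ∫ y, ∑ γ ∈ hS₂.toFinset, k y * (starRingEnd ℂ) (k (g⁻¹ * (γ : G) * g * y)) ∂μ := by
          refine integral_congr_ae (Filter.Eventually.of_forall fun y => ?_)
          exact tsum_eq_sum fun γ hγ =>
            hzero₂ γ (fun hmem => hγ (hS₂.mem_toFinset.mpr hmem)) y
      _ = ∑ γ ∈ hS₂.toFinset, ∫ y, k y * (starRingEnd ℂ) (k (g⁻¹ * (γ : G) * g * y)) ∂μ :=
          integral_finset_sum _ fun γ _ => hconv_int γ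
      _ = ∑' γ : Γ, ∫ y, k y * (starRingEnd ℂ) (k (g⁻¹ * (γ : G) * g * y)) ∂μ := by
          refine (tsum_eq_sum fun γ hγ => ?_).symm
          have h0 := hzero₂ γ (fun hmem => hγ (hS₂.mem_toFinset.mpr hmem))
          simp only [h0, integral_zero]
      _ = ∑' γ : Γ, ∫ x, k x *
            (starRingEnd ℂ) (k ((g⁻¹ * ((γ⁻¹ : Γ) : G) * g)⁻¹ * x)) ∂μ := by
          refine tsum_congr fun γ => integral_congr_ae (Filter.Eventually.of_forall fun x => ?_)
          beta_reduce
          rw [show (g⁻¹ * ((γ⁻¹ : Γ) : G) * g)⁻¹ * x = g⁻¹ * (γ : G) * g * x from by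
            rw [Subgroup.coe_inv]; group]
      _ = ∑' γ : Γ, ∫ x, k x * (starRingEnd ℂ) (k ((g⁻¹ * (γ : G) * g)⁻¹ * x)) ∂μ :=
          (Equiv.inv Γ).tsum_eq fun γ : Γ =>
            ∫ x, k x * (starRingEnd ℂ) (k ((g⁻¹ * (γ : G) * g)⁻¹ * x)) ∂μ
  exact ⟨h1, hMem, hJfin, hmain⟩
end
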